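/- For positive integers n, m with m ≥ 2, the number of compositions of n into m parts that contain at least one part greater than A, assuming 2(A+1) > n (so at most one part can exceed A), equals m · Σ_{i=A+1}^{n} C(n-i-1, m-2). -/

import Mathlib

/-- Generalized binomial coefficient on integers: `C(a,b) = 0` whenever
`b < 0`, `a < 0`, or `b > a`. -/
def ichoose (a b : ℤ) : ℤ :=
  if 0 ≤ b ∧ b ≤ a then ((a.toNat).choose b.toNat : ℤ) else 0

namespace NCBP

open Finset List

lemma ichoose_coe (a b : ℕ) : ichoose (a : ℤ) (b : ℤ) = (a.choose b : ℤ) := by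
  unfold ichoose
  split_ifs with h
  · congr 1 <;> simp
  · have hba : a < b := by omega
    rw [Nat.choose_eq_zero_of_lt hba]; simp

lemma comp_ext {n : ℕ} {c d : Composition n} (h : c.blocks = d.blocks) : c = d := by
  cases c; cases d; simpa using h

/-! ### list lemmas -/

lemma sum_insertIdx (a : ℕ) : ∀ (j : ℕ) (l : List ℕ), j ≤ l.length →
    (l.insertIdx j a).sum = a + l.sum
  | 0, l, _ => by simp
  | j+1, [], h => by simp at h
  | j+1, x :: l, h => by
    rw [List.insertIdx_succ_cons, List.sum_cons, List.sum_cons,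
      sum_insertIdx a j l (by simpa using h)]
    omega

lemma sum_eraseIdx : ∀ (j : ℕ) (l : List ℕ), j < l.length →
    l.getD j 0 + (l.eraseIdx j).sum = l.sum
  | 0, x :: l, _ => by simp
  | j+1, x :: l, h => by
    rw [List.eraseIdx_cons_succ, List.getD_cons_succ, List.sum_cons, List.sum_cons,
      ← sum_eraseIdx j l (by simpa using h)]
    omega

lemma mem_eraseIdx : ∀ (j : ℕ) (l : List ℕ) (x : ℕ), x ∈ l.eraseIdx j → x ∈ l
  | _, [], x, h => by simp at h
  | 0, y :: l, x, h => by
    rw [List.eraseIdx_cons_zero] at h; exact List.mem_cons_of_mem _ h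
  | j+1, y :: l, x, h => by
    rw [List.eraseIdx_cons_succ, List.mem_cons] at h
    rcases h with h | h
    · exact h ▸ List.mem_cons_self
    · exact List.mem_cons_of_mem _ (mem_eraseIdx j l x h)

lemma insertIdx_getD_eraseIdx : ∀ (j : ℕ) (l : List ℕ), j < l.length →
    (l.eraseIdx j).insertIdx j (l.getD j 0) = l
  | 0, x :: l, _ => by simp
  | j+1, x :: l, h => by
    rw [List.eraseIdx_cons_succ, List.getD_cons_succ, List.insertIdx_succ_cons,
      insertIdx_getD_eraseIdx j l (by simpa using h)]

lemma getD_insertIdx (a : ℕ) : ∀ (j : ℕ) (l : List ℕ), j ≤ l.length →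
    (l.insertIdx j a).getD j 0 = a
  | 0, l, _ => by simp
  | j+1, [], h => by simp at h
  | j+1, x :: l, h => by
    rw [List.insertIdx_succ_cons, List.getD_cons_succ, getD_insertIdx a j l (by simpa using h)]

lemma findIdx_insertIdx (p : ℕ → Bool) (a : ℕ) : ∀ (j : ℕ) (l : List ℕ), j ≤ l.length →
    (∀ x ∈ l, ¬ p x) → p a → (l.insertIdx j a).findIdx p = j
  | 0, l, _, _, ha => by
    rw [List.insertIdx_zero, List.findIdx_cons, ha]; rfl
  | j+1, [], h, _, _ => by simp at h
  | j+1, x :: l, h, hl, ha => by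
    have hx : p x = false := by
      have := hl x (List.mem_cons_self); simpa using this
    rw [List.insertIdx_succ_cons, List.findIdx_cons, hx,
      findIdx_insertIdx p a j l (by simpa using h)
        (fun y hy => hl y (List.mem_cons_of_mem _ hy)) ha]
    rfl

/-! ### counting compositions by length -/

/-- Number of compositions of `s` with `k` parts. -/
def compCount (s k : ℕ) : ℕ := (Finset.univ.filter (fun c : Composition s => c.length = k)).card

lemma comp_zero_blocks (c : Composition 0) : c.blocks = [] := by
  have hs := c.blocks_sum
  cases hb : c.blocks with
  | nil => rfl
  | cons x l =>
    have hx : 0 < x := c.blocks_pos (by rw [hb]; exact List.mem_cons_self)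
    rw [hb, List.sum_cons] at hs
    omega

lemma compCount_zero (k : ℕ) (hk : k ≠ 0) : compCount 0 k = 0 := by
  rw [compCount, Finset.card_eq_zero, Finset.filter_eq_empty_iff]
  intro c _
  have : c.length = 0 := by
    rw [← Composition.blocks_length, comp_zero_blocks c]; rfl
  omega

lemma compCount_one (s : ℕ) (hs : 0 < s) : compCount s 1 = 1 := by
  rw [compCount]
  rw [show (Finset.univ.filter (fun c : Composition s => c.length = 1))
      = {Composition.single s hs} from ?_, Finset.card_singleton]
  ext c
  simp [Composition.eq_single_iff_length]

lemma compCount_succ (s k : ℕ) (hs : 0 < s) :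
    compCount s (k+1) = ∑ j ∈ Icc 1 s, compCount (s-j) k := by
  rw [compCount,
    Finset.card_eq_sum_card_fiberwise (f := fun c : Composition s => c.blocks.headI)
      (t := Icc 1 s) ?hmem]
  case hmem =>
    intro c hc
    rw [Finset.mem_coe] at hc
    simp only [Finset.mem_filter, Finset.mem_univ, true_and] at hc
    have hne : c.blocks ≠ [] := by
      intro h
      have := c.blocks_length
      rw [h, hc] at this
      simp at this
    obtain ⟨x, l, hxl⟩ := List.exists_cons_of_ne_nil hne
    have hx : 0 < x := c.blocks_pos (by rw [hxl]; exact List.mem_cons_self)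
    have hsum := c.blocks_sum
    rw [hxl, List.sum_cons] at hsum
    show c.blocks.headI ∈ Icc 1 s
    rw [hxl]
    simp only [List.headI_cons, Finset.mem_Icc]
    omega
  refine Finset.sum_congr rfl (fun j hj => ?_)
  rw [Finset.mem_Icc] at hj
  rw [compCount]
  refine Finset.card_bij'
    (i := fun c hc => ⟨c.blocks.tail, ?_, ?_⟩)
    (j := fun d hd => ⟨j :: d.blocks, ?_, ?_⟩) ?_ ?_ ?_ ?_
  case refine_1 =>
    intro x hx
    exact c.blocks_pos (List.mem_of_mem_tail hx)
  case refine_2 =>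
    simp only [Finset.mem_filter, Finset.mem_univ, true_and] at hc
    obtain ⟨hlen, hhead⟩ := hc
    have hne : c.blocks ≠ [] := by
      intro h
      have := c.blocks_length
      rw [h, hlen] at this
      simp at this
    obtain ⟨x, l, hxl⟩ := List.exists_cons_of_ne_nil hne
    have hsum := c.blocks_sum
    rw [hxl, List.sum_cons] at hsum
    have hxj : x = j := by rw [hxl] at hhead; simpa using hhead
    rw [hxl]
    simp only [List.tail_cons]
    omega
  case refine_3 =>
    intro x hx
    rw [List.mem_cons] at hx
    rcases hx with rfl | hx
    · omega
    · exact d.blocks_pos hx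
  case refine_4 =>
    rw [List.sum_cons, d.blocks_sum]
    omega
  · -- maps forward
    intro c hc
    simp only [Finset.mem_filter, Finset.mem_univ, true_and] at hc
    obtain ⟨hlen, _⟩ := hc
    refine Finset.mem_filter.2 ⟨Finset.mem_univ _, ?_⟩
    show (c.blocks.tail).length = k
    rw [List.length_tail, c.blocks_length, hlen]
    omega
  · -- maps backward
    intro d hd
    simp only [Finset.mem_filter, Finset.mem_univ, true_and] at hd
    refine Finset.mem_filter.2 ⟨Finset.mem_filter.2 ⟨Finset.mem_univ _, ?_⟩, rfl⟩
    show (j :: d.blocks).length = k + 1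
    rw [List.length_cons, d.blocks_length, hd]
  · -- left inverse
    intro c hc
    simp only [Finset.mem_filter, Finset.mem_univ, true_and] at hc
    obtain ⟨hlen, hhead⟩ := hc
    apply comp_ext
    show j :: c.blocks.tail = c.blocks
    have hne : c.blocks ≠ [] := by
      intro h
      have := c.blocks_length
      rw [h, hlen] at this
      simp at this
    obtain ⟨x, l, hxl⟩ := List.exists_cons_of_ne_nil hne
    have hxj : x = j := by rw [hxl] at hhead; simpa using hhead
    rw [hxl, List.tail_cons, hxj]
  · -- right inverse
    intro d hd
    apply comp_ext
    show (j :: d.blocks).tail = d.blocks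
    rfl

lemma sum_range_choose' (n k : ℕ) :
    ∑ t ∈ Finset.range n, t.choose k = n.choose (k+1) := by
  induction n with
  | zero => simp [Nat.choose_eq_zero_of_lt]
  | succ n ih =>
    rw [Finset.sum_range_succ, ih, Nat.choose_succ_succ n k]
    simp only [Nat.succ_eq_add_one]
    omega

lemma compCount_eq (k : ℕ) : ∀ s, 0 < s → compCount s (k+1) = (s-1).choose k := by
  induction k with
  | zero =>
    intro s hs
    rw [compCount_one s hs, Nat.choose_zero_right]
  | succ k ih =>
    intro s hs
    rw [compCount_succ s (k+1) hs]
    have h1 : ∑ j ∈ Icc 1 s, compCount (s-j) (k+1)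
        = ∑ t ∈ Finset.range s, compCount (s-1-t) (k+1) := by
      refine Finset.sum_nbij' (fun j => j - 1) (fun t => t + 1) ?_ ?_ ?_ ?_ ?_
      · intro a ha; rw [Finset.mem_Icc] at ha; rw [Finset.mem_range]; omega
      · intro b hb; rw [Finset.mem_range] at hb; rw [Finset.mem_Icc]; omega
      · intro a ha; rw [Finset.mem_Icc] at ha; omega
      · intro b _; omega
      · intro a ha
        rw [Finset.mem_Icc] at ha
        congr 1
        omega
    rw [h1, Finset.sum_range_reflect (fun t => compCount t (k+1)) s]
    obtain ⟨s', rfl⟩ : ∃ s', s = s' + 1 := ⟨s - 1, by omega⟩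
    rw [Finset.sum_range_succ', compCount_zero (k+1) (by omega), Nat.add_zero]
    have h2 : ∑ i ∈ Finset.range s', compCount (i+1) (k+1)
        = ∑ i ∈ Finset.range s', i.choose k := by
      refine Finset.sum_congr rfl (fun i _ => ?_)
      rw [ih (i+1) (by omega)]
      simp
    rw [h2, sum_range_choose']
    simp


lemma fiber_card {n m A : ℕ} (hm : 2 ≤ m) (hA : 0 < A) (hbound : n < 2*(A+1))
    (j i : ℕ) (hj : j < m) (hi1 : A + 1 ≤ i) (hi2 : i ≤ n) :
    ((Finset.univ.filter
        (fun c : Composition n => c.length = m ∧ ∃ x ∈ c.blocks, A < x)).filter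
      (fun c => (c.blocks.findIdx (fun x => decide (A < x)),
                 c.blocks.getD (c.blocks.findIdx (fun x => decide (A < x))) 0) = (j, i))).card
      = compCount (n - i) (m - 1) := by
  classical
  rw [compCount]
  refine Finset.card_bij'
    (i := fun c hc => ⟨c.blocks.eraseIdx j, ?_, ?_⟩)
    (j := fun d hd => ⟨d.blocks.insertIdx j i, ?_, ?_⟩) ?_ ?_ ?_ ?_
  case refine_1 =>
    intro x hx
    exact c.blocks_pos (mem_eraseIdx j c.blocks x hx)
  case refine_2 =>
    simp only [Finset.mem_filter, Finset.mem_univ, true_and, Prod.mk.injEq] at hc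
    obtain ⟨⟨hlen, _⟩, hJ, hV⟩ := hc
    have hjl : j < c.blocks.length := by rw [c.blocks_length, hlen]; exact hj
    have := sum_eraseIdx j c.blocks hjl
    rw [hJ] at hV
    rw [hV, c.blocks_sum] at this
    omega
  case refine_3 =>
    simp only [Finset.mem_filter, Finset.mem_univ, true_and] at hd
    have hjd : j ≤ d.blocks.length := by rw [d.blocks_length, hd]; omega
    intro x hx
    rcases (List.mem_insertIdx hjd).1 hx with rfl | hx
    · omega
    · exact d.blocks_pos hx
  case refine_4 =>
    simp only [Finset.mem_filter, Finset.mem_univ, true_and] at hd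
    have hjd : j ≤ d.blocks.length := by rw [d.blocks_length, hd]; omega
    rw [sum_insertIdx i j d.blocks hjd, d.blocks_sum]
    omega
  · -- maps forward
    intro c hc
    simp only [Finset.mem_filter, Finset.mem_univ, true_and, Prod.mk.injEq] at hc
    obtain ⟨⟨hlen, _⟩, hJ, hV⟩ := hc
    have hjl : j < c.blocks.length := by rw [c.blocks_length, hlen]; exact hj
    refine Finset.mem_filter.2 ⟨Finset.mem_univ _, ?_⟩
    show (c.blocks.eraseIdx j).length = m - 1
    rw [List.length_eraseIdx_of_lt hjl, c.blocks_length, hlen]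
  · -- maps backward
    intro d hd
    simp only [Finset.mem_filter, Finset.mem_univ, true_and] at hd
    have hjd : j ≤ d.blocks.length := by rw [d.blocks_length, hd]; omega
    have hsmall : ∀ x ∈ d.blocks, ¬ ((fun x => decide (A < x)) x : Prop) := by
      intro x hx
      have hxs : x ≤ d.blocks.sum :=
        List.single_le_sum (fun y _ => Nat.zero_le y) x hx
      rw [d.blocks_sum] at hxs
      simp only [decide_eq_true_eq]
      omega
    have hpa : ((fun x => decide (A < x)) i : Prop) := by
      simp only [decide_eq_true_eq]
      omega
    refine Finset.mem_filter.2 ⟨Finset.mem_filter.2 ⟨Finset.mem_univ _, ?_, ?_⟩, ?_⟩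
    · show (d.blocks.insertIdx j i).length = m
      rw [List.length_insertIdx_of_le_length hjd, d.blocks_length, hd]
      omega
    · exact ⟨i, (List.mem_insertIdx hjd).2 (Or.inl rfl), by omega⟩
    · show ((d.blocks.insertIdx j i).findIdx (fun x => decide (A < x)),
        (d.blocks.insertIdx j i).getD ((d.blocks.insertIdx j i).findIdx
          (fun x => decide (A < x))) 0) = (j, i)
      rw [findIdx_insertIdx (fun x => decide (A < x)) i j d.blocks hjd hsmall hpa,
        getD_insertIdx i j d.blocks hjd]
  · -- left inverse
    intro c hc
    simp only [Finset.mem_filter, Finset.mem_univ, true_and, Prod.mk.injEq] at hc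
    obtain ⟨⟨hlen, _⟩, hJ, hV⟩ := hc
    have hjl : j < c.blocks.length := by rw [c.blocks_length, hlen]; exact hj
    apply comp_ext
    show (c.blocks.eraseIdx j).insertIdx j i = c.blocks
    rw [hJ] at hV
    rw [← hV, insertIdx_getD_eraseIdx j c.blocks hjl]
  · -- right inverse
    intro d hd
    simp only [Finset.mem_filter, Finset.mem_univ, true_and] at hd
    apply comp_ext
    show (d.blocks.insertIdx j i).eraseIdx j = d.blocks
    exact List.eraseIdx_insertIdx_self (i := j) (l := d.blocks) i

end NCBP

theorem num_compositions_big_part (n m A : ℕ) (hn : 0 < n) (hm : 2 ≤ m)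
    (hA : 0 < A) (hbound : n < 2 * (A + 1)) :
    ((Finset.univ.filter
        (fun c : Composition n => c.length = m ∧ ∃ x ∈ c.blocks, A < x)).card : ℤ)
      = (m : ℤ) * ∑ i ∈ Finset.Icc (A + 1) n,
          ichoose ((n : ℤ) - (i : ℤ) - 1) ((m : ℤ) - 2) := by
  classical
  have key : (Finset.univ.filter
        (fun c : Composition n => c.length = m ∧ ∃ x ∈ c.blocks, A < x)).card
      = ∑ q ∈ Finset.range m ×ˢ Finset.Icc (A+1) n,
          NCBP.compCount (n - q.2) (m-1) := by
    rw [Finset.card_eq_sum_card_fiberwise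
      (f := fun c : Composition n => (c.blocks.findIdx (fun x => decide (A < x)),
        c.blocks.getD (c.blocks.findIdx (fun x => decide (A < x))) 0))
      (t := Finset.range m ×ˢ Finset.Icc (A+1) n) ?hf]
    case hf =>
      intro c hc
      rw [Finset.mem_coe] at hc
      simp only [Finset.mem_filter, Finset.mem_univ, true_and] at hc
      obtain ⟨hlen, x, hx, hAx⟩ := hc
      have hlt : c.blocks.findIdx (fun x => decide (A < x)) < c.blocks.length :=
        List.findIdx_lt_length_of_exists ⟨x, hx, by simpa using hAx⟩
      have hbig : A < c.blocks[c.blocks.findIdx (fun x => decide (A < x))] := by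
        have := List.findIdx_getElem (w := hlt) (p := fun x => decide (A < x))
        simpa using this
      have hmem : c.blocks[c.blocks.findIdx (fun x => decide (A < x))] ∈ c.blocks :=
        List.getElem_mem hlt
      have hle : c.blocks[c.blocks.findIdx (fun x => decide (A < x))] ≤ n := by
        have := List.single_le_sum (l := c.blocks) (fun y _ => Nat.zero_le y) _ hmem
        rwa [c.blocks_sum] at this
      dsimp only
      rw [Finset.mem_coe, Finset.mem_product]
      constructor
      · rw [Finset.mem_range]
        calc c.blocks.findIdx (fun x => decide (A < x)) < c.blocks.length := hlt
          _ = m := by rw [c.blocks_length, hlen]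
      · rw [Finset.mem_Icc, List.getD_eq_getElem _ _ hlt]
        omega
    refine Finset.sum_congr rfl (fun q hq => ?_)
    rw [Finset.mem_product, Finset.mem_range, Finset.mem_Icc] at hq
    exact NCBP.fiber_card hm hA hbound q.1 q.2 hq.1 hq.2.1 hq.2.2
  have key2 : ((Finset.univ.filter
        (fun c : Composition n => c.length = m ∧ ∃ x ∈ c.blocks, A < x)).card : ℤ)
      = ∑ q ∈ Finset.range m ×ˢ Finset.Icc (A+1) n,
          ((NCBP.compCount (n - q.2) (m-1) : ℤ)) := by
    rw [key]; push_cast; rfl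
  rw [key2, Finset.sum_product]
  dsimp only
  have term : ∀ i ∈ Finset.Icc (A+1) n,
      ((NCBP.compCount (n - i) (m-1) : ℤ)) = ichoose ((n : ℤ) - (i : ℤ) - 1) ((m : ℤ) - 2) := by
    intro i hi
    rw [Finset.mem_Icc] at hi
    rcases eq_or_lt_of_le hi.2 with rfl | hin
    · rw [Nat.sub_self, NCBP.compCount_zero (m-1) (by omega)]
      unfold ichoose
      rw [if_neg]
      · simp
      · rintro ⟨h1, h2⟩
        omega
    · have h1 : m - 1 = (m-2) + 1 := by omega
      rw [h1, NCBP.compCount_eq (m-2) (n-i) (by omega)]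
      have h2 : ((n : ℤ) - (i : ℤ) - 1) = ((n - i - 1 : ℕ) : ℤ) := by omega
      have h3 : ((m : ℤ) - 2) = ((m - 2 : ℕ) : ℤ) := by omega
      rw [h2, h3, NCBP.ichoose_coe]
  have inner : ∑ i ∈ Finset.Icc (A+1) n, ((NCBP.compCount (n - i) (m-1) : ℤ))
      = ∑ i ∈ Finset.Icc (A+1) n, ichoose ((n : ℤ) - (i : ℤ) - 1) ((m : ℤ) - 2) :=
    Finset.sum_congr rfl term
  rw [inner, Finset.sum_const, Finset.card_range, nsmul_eq_mul]
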